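/- Let R̂₀ be a complete discrete valuation ring with uniformizer t and fraction field F₀, containing a subring T ⊆ R̂₀ that is also a complete discrete valuation ring with uniformizer t. Let |·| be the norm on F₀ defined by the t-adic valuation, extended as the maximum norm on affine n-space, and let F₁, F₂ be subfields of F₀ containing T. Assume there are t-adically complete T-submodules V ⊆ F₁ ∩ R̂₀ and W ⊆ F₂ ∩ R̂₀ with V + W = R̂₀, and assume F₁ is t-adically dense in F₀. Let f = (f₁, …, fₙ) : 𝔸ⁿ_{F₀} × 𝔸ⁿ_{F₀} ⇢ 𝔸ⁿ_{F₀} be an F₀-rational map defined on a Zariski open set U ⊆ 𝔸ⁿ_{F₀} × 𝔸ⁿ_{F₀} containing the origin (0,0), such that, in multi-index notation, each fᵢ has a power series expansion fᵢ = T_{1,i}(x) + T_{2,i}(y) + Σ_{|(ν,ρ)|≥2} c_{ν,ρ,i} x^ν y^ρ with coefficients c_{ν,ρ,i} ∈ F₀, where x = (x₁,…,xₙ), y = (y₁,…,yₙ), and T_j = (T_{j,1},…,T_{j,n}) is an automorphism of the F₀-vector space F₀ⁿ for j = 1, 2. Then there is a real number ε > 0 such that for all a ∈ 𝔸ⁿ(F₀)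 with |a| ≤ ε, there exist v ∈ F₁ⁿ and w ∈ F₂ⁿ such that (v, w) ∈ U(F₀) and f(v, w) = a. -/

import Mathlib

/-!
STATEMENT 1: Let R̂₀ be a complete discrete valuation ring with uniformizer t and fraction
field F₀, containing a subring T that is also a complete discrete valuation ring with
uniformizer t.  Let F₁, F₂ be subfields of F₀ containing T, with F₁ t-adically dense in
F₀.  Assume there are t-adically complete T-submodules V ⊆ F₁ ∩ R̂₀ and W ⊆ F₂ ∩ R̂₀ with
V + W = R̂₀.  Let f = (f₁,…,fₙ) : 𝔸ⁿ × 𝔸ⁿ ⇢ 𝔸ⁿ be an F₀-rational map defined on a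
Zariski open set containing the origin (represented as fᵢ = pᵢ/qᵢ with qᵢ(0,0) ≠ 0),
whose expansion at the origin is fᵢ = T_{1,i}(x) + T_{2,i}(y) + (terms of degree ≥ 2),
where T₁, T₂ are automorphisms of the vector space F₀ⁿ.  Then there is ε > 0 such that
every a ∈ 𝔸ⁿ(F₀) with |a| ≤ ε is of the form a = f(v,w) with v ∈ F₁ⁿ, w ∈ F₂ⁿ and (v,w)
in the domain of f.

In the t-adic norm, "|a| ≤ ε for suitable ε > 0" means "a ∈ tᵐ·R̂₀ for a suitable m ∈ ℕ",
which is how we render the conclusion.  The condition on the expansion of f at the origin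
is rendered as: all coefficients of pᵢ − Lᵢ·qᵢ in total degree ≤ 1 vanish, where Lᵢ is
the linear polynomial T_{1,i}(x) + T_{2,i}(y); this is equivalent to f(0,0) = 0 with
linear part T₁ ⊕ T₂ since qᵢ(0,0) ≠ 0.
-/

open MvPolynomial

/-- The linear polynomial `L i = T_{1,i}(x) + T_{2,i}(y)` in the 2n variables
`x₁,…,xₙ,y₁,…,yₙ`, where `T₁, T₂` are linear automorphisms of `F₀ⁿ`. -/
noncomputable def linPart {F0 : Type*} [Field F0] {n : ℕ}
    (T1 T2 : (Fin n → F0) ≃ₗ[F0] (Fin n → F0)) (i : Fin n) :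
    MvPolynomial (Fin n ⊕ Fin n) F0 :=
  (∑ j : Fin n, C (T1 (Pi.single j 1) i) * X (Sum.inl j)) +
  (∑ j : Fin n, C (T2 (Pi.single j 1) i) * X (Sum.inr j))




section Gen
variable {F : Type*} [Field F] {σ : Type*} (G : ℤ → AddSubgroup F)
variable (hmul : ∀ {k l : ℤ} {x y : F}, x ∈ G k → y ∈ G l → x * y ∈ G (k + l))
variable (hmono : ∀ {k l : ℤ}, k ≤ l → ∀ {x : F}, x ∈ G l → x ∈ G k)
variable (hone : (1 : F) ∈ G 0)

include hmul hone in
lemma Gpow {k : ℤ} {x : F} (hx : x ∈ G k) (e : ℕ) : x ^ e ∈ G (e * k) := by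
  induction e with
  | zero => simpa using hone
  | succ e ih =>
    have := hmul ih hx
    rw [← pow_succ x e] at this
    convert this using 2
    push_cast; ring

include hmul hone in
lemma Gprod {k : ℤ} (s : Finset σ) (d : σ → ℕ) (z : σ → F) (hz : ∀ i, z i ∈ G k) :
    (∏ i ∈ s, z i ^ d i) ∈ G ((∑ i ∈ s, d i : ℕ) * k) := by
  classical
  induction s using Finset.induction with
  | empty => simpa using hone
  | insert a s hns ih =>
    rw [Finset.prod_insert hns, Finset.sum_insert hns]
    have := hmul (Gpow G hmul hone (hz a) (d a)) ih
    convert this using 2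
    push_cast; ring

include hmul hmono hone in
lemma GpowDiff {b e : ℤ} {y y' : F} (hy : y ∈ G b) (hy' : y' ∈ G b)
    (hd : y' - y ∈ G e) (k : ℕ) : y' ^ k - y ^ k ∈ G (e + k * b - b) := by
  induction k with
  | zero => simpa using (G _).zero_mem
  | succ k ih =>
    have h1 : y' * (y' ^ k - y ^ k) ∈ G (b + (e + k * b - b)) := hmul hy' ih
    have h2 : (y' - y) * y ^ k ∈ G (e + k * b) := hmul hd (Gpow G hmul hone hy k)
    have h3 : y' ^ (k+1) - y ^ (k+1) = y' * (y' ^ k - y ^ k) + (y' - y) * y ^ k := by ring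
    rw [h3]
    exact (G _).add_mem (hmono (le_of_eq (by push_cast; ring)) h1)
      (hmono (le_of_eq (by push_cast; ring)) h2)

include hmul hmono hone in
lemma GprodDiff {b e : ℤ} (s : Finset σ) (d : σ → ℕ) (z z' : σ → F)
    (hz : ∀ i, z i ∈ G b) (hz' : ∀ i, z' i ∈ G b) (hdiff : ∀ i, z' i - z i ∈ G e) :
    (∏ i ∈ s, z' i ^ d i) - (∏ i ∈ s, z i ^ d i) ∈ G (e + (∑ i ∈ s, d i : ℕ) * b - b) := by
  classical
  induction s using Finset.induction with
  | empty => simpa using (G _).zero_mem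
  | insert a s hns ih =>
    rw [Finset.prod_insert hns, Finset.prod_insert hns, Finset.sum_insert hns]
    have key : z' a ^ d a * ∏ i ∈ s, z' i ^ d i - z a ^ d a * ∏ i ∈ s, z i ^ d i
        = z' a ^ d a * ((∏ i ∈ s, z' i ^ d i) - ∏ i ∈ s, z i ^ d i)
          + (z' a ^ d a - z a ^ d a) * ∏ i ∈ s, z i ^ d i := by ring
    rw [key]
    have h1 := hmul (Gpow G hmul hone (hz' a) (d a)) ih
    have h2 := hmul (GpowDiff G hmul hmono hone (hz a) (hz' a) (hdiff a) (d a))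
      (Gprod G hmul hone s d z hz)
    exact (G _).add_mem (hmono (le_of_eq (by push_cast; ring)) h1)
      (hmono (le_of_eq (by push_cast; ring)) h2)

include hmul hmono hone in
lemma GevalMem {D b : ℤ} (hb : 0 ≤ b) (μ : ℕ) (P : MvPolynomial σ F) (z : σ → F)
    (hc : ∀ d, coeff d P ∈ G (-D)) (hz : ∀ i, z i ∈ G b)
    (hμ : ∀ d : σ →₀ ℕ, (d.sum fun _ e => e) < μ → coeff d P = 0) :
    eval z P ∈ G (μ * b - D) := by
  rw [eval_eq]
  refine AddSubgroup.sum_mem _ fun d hd => ?_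
  by_cases hcase : (d.sum fun _ e => e) < μ
  · rw [hμ d hcase]; simpa using (G _).zero_mem
  · push_neg at hcase
    have h1 := hmul (hc d) (Gprod G hmul hone d.support d z hz)
    refine hmono ?_ h1
    have heq : (d.sum fun _ e => e) = ∑ i ∈ d.support, d i := rfl
    have hsum : (μ : ℤ) ≤ (∑ i ∈ d.support, d i : ℕ) := by
      rw [heq] at hcase; exact_mod_cast hcase
    nlinarith [hb, hsum]

include hmul hmono hone in
lemma GevalDiff {D b e : ℤ} (hb : 0 ≤ b) (μ : ℕ) (P : MvPolynomial σ F) (z z' : σ → F)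
    (hc : ∀ d, coeff d P ∈ G (-D)) (hz : ∀ i, z i ∈ G b) (hz' : ∀ i, z' i ∈ G b)
    (hdiff : ∀ i, z' i - z i ∈ G e)
    (hμ : ∀ d : σ →₀ ℕ, (d.sum fun _ e => e) < μ → coeff d P = 0) :
    eval z' P - eval z P ∈ G (e + μ * b - b - D) := by
  rw [eval_eq, eval_eq, ← Finset.sum_sub_distrib]
  refine AddSubgroup.sum_mem _ fun d hd => ?_
  rw [← mul_sub]
  by_cases hcase : (d.sum fun _ e => e) < μ
  · rw [hμ d hcase]; simpa using (G _).zero_mem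
  · push_neg at hcase
    have h1 := hmul (hc d) (GprodDiff G hmul hmono hone d.support d z z' hz hz' hdiff)
    refine hmono ?_ h1
    have heq : (d.sum fun _ e => e) = ∑ i ∈ d.support, d i := rfl
    have hsum : (μ : ℤ) ≤ (∑ i ∈ d.support, d i : ℕ) := by
      rw [heq] at hcase; exact_mod_cast hcase
    nlinarith [hb, hsum]

end Gen


section Jsec
variable {R0 : Type*} [CommRing R0] [IsDomain R0] [IsDiscreteValuationRing R0]

local notation "F0" => FractionRing R0
variable (t : R0)

/-- `J k` = elements of `F0` of the form `t^k · r` with `r` integral. -/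
noncomputable def Jgrp (k : ℤ) : AddSubgroup F0 where
  carrier := {x | ∃ r : R0, x = (algebraMap R0 F0 t) ^ k * algebraMap R0 F0 r}
  zero_mem' := ⟨0, by simp⟩
  add_mem' := by
    rintro x y ⟨r, rfl⟩ ⟨s, rfl⟩
    exact ⟨r + s, by rw [map_add]; ring⟩
  neg_mem' := by
    rintro x ⟨r, rfl⟩
    exact ⟨-r, by rw [map_neg]; ring⟩

variable {t}

lemma iota_inj : Function.Injective (algebraMap R0 F0) := IsFractionRing.injective R0 F0

lemma tau_ne (ht : t ≠ 0) : algebraMap R0 F0 t ≠ 0 :=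
  fun h => ht (iota_inj (by simpa using h))

lemma Jmul (ht : t ≠ 0) {k l : ℤ} {x y : F0} (hx : x ∈ Jgrp t k) (hy : y ∈ Jgrp t l) :
    x * y ∈ Jgrp t (k + l) := by
  obtain ⟨r, rfl⟩ := hx; obtain ⟨s, rfl⟩ := hy
  exact ⟨r * s, by rw [map_mul, zpow_add₀ (tau_ne ht)]; ring⟩

lemma Jone : (1 : F0) ∈ Jgrp t 0 := ⟨1, by simp⟩

lemma Jmono (ht : t ≠ 0) {k l : ℤ} (hkl : k ≤ l) {x : F0} (hx : x ∈ Jgrp t l) :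
    x ∈ Jgrp t k := by
  obtain ⟨r, rfl⟩ := hx
  refine ⟨t ^ (l - k).toNat * r, ?_⟩
  rw [map_mul, map_pow,
    show (algebraMap R0 F0 t)^((l-k).toNat) = (algebraMap R0 F0 t)^(((l-k).toNat : ℤ))
      from (zpow_natCast _ _).symm,
    ← mul_assoc, ← zpow_add₀ (tau_ne ht)]
  congr 2
  omega

/-- Interface with `ℕ`-power statements. -/
lemma Jnat {k : ℕ} {x : F0} :
    x ∈ Jgrp t (k : ℤ) ↔ ∃ r : R0, x = algebraMap R0 F0 (t ^ k * r) := by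
  constructor
  · rintro ⟨r, rfl⟩; exact ⟨r, by rw [map_mul, map_pow, zpow_natCast]⟩
  · rintro ⟨r, rfl⟩; exact ⟨r, by rw [map_mul, map_pow, zpow_natCast]⟩

lemma Jhaus (hirr : Irreducible t) {x : F0}
    (hx : ∀ k : ℤ, x ∈ Jgrp t k) : x = 0 := by
  obtain ⟨r, hr⟩ := hx 0
  rw [zpow_zero, one_mul] at hr
  subst hr
  have h0 : r = 0 := by
    refine IsHausdorff.haus
      (inferInstance : IsHausdorff (IsLocalRing.maximalIdeal R0) R0) r fun n => ?_
    obtain ⟨s, hs⟩ := (Jnat).mp (hx (n : ℤ))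
    have : r = t ^ n * s := iota_inj hs
    simp only [← Ideal.one_eq_top, smul_eq_mul, mul_one, SModEq.zero,
      hirr.maximalIdeal_eq, Ideal.span_singleton_pow, Ideal.mem_span_singleton]
    exact ⟨s, this⟩
  rw [h0, map_zero]

lemma JnotAll (hirr : Irreducible t) {x : F0} (hx : x ≠ 0) :
    ∃ c : ℕ, x ∉ Jgrp t ((c : ℤ) + 1) := by
  by_contra h
  push_neg at h
  refine hx (Jhaus hirr fun k => ?_)
  exact Jmono hirr.ne_zero (by omega : k ≤ ((k.toNat : ℤ) + 1)) (h k.toNat)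

lemma unit_inv_iota (u : R0ˣ) : (algebraMap R0 F0 u)⁻¹ = algebraMap R0 F0 ↑u⁻¹ := by
  refine (eq_inv_of_mul_eq_one_left ?_).symm
  rw [← map_mul]
  simp

lemma Jinv (hirr : Irreducible t) {D c : ℕ} {x : F0}
    (hx1 : x ∈ Jgrp t (-(D : ℤ))) (hx2 : x ∉ Jgrp t ((c : ℤ) + 1)) :
    x ≠ 0 ∧ x⁻¹ ∈ Jgrp t (-((c : ℤ) + D)) := by
  have ht : t ≠ 0 := hirr.ne_zero
  obtain ⟨r, rfl⟩ := hx1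
  have hr : r ≠ 0 := by
    rintro rfl
    exact hx2 (by simpa using (Jgrp t _).zero_mem)
  obtain ⟨v, u, huv⟩ := IsDiscreteValuationRing.eq_unit_mul_pow_irreducible hr hirr
  have hxval : (algebraMap R0 F0 t) ^ (-(D:ℤ)) * algebraMap R0 F0 r
      = (algebraMap R0 F0 t) ^ ((v : ℤ) - D) * algebraMap R0 F0 (u : R0) := by
    rw [huv, map_mul, map_pow, ← zpow_natCast (algebraMap R0 F0 t) v,
      sub_eq_add_neg, zpow_add₀ (tau_ne ht)]
    ring
  have hvle : (v : ℤ) ≤ c + D := by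
    by_contra hv
    push_neg at hv
    refine hx2 ?_
    rw [hxval]
    exact Jmono ht (by omega) ⟨u, rfl⟩
  constructor
  · exact mul_ne_zero (zpow_ne_zero _ (tau_ne ht)) fun h => hr (iota_inj (by simpa using h))
  · rw [hxval, mul_inv, ← zpow_neg, unit_inv_iota]
    refine Jmono ht (by omega : -((c:ℤ) + D) ≤ -((v:ℤ) - D)) ⟨↑u⁻¹, rfl⟩

lemma Jex (hirr : Irreducible t) (x : F0) : ∃ D : ℕ, x ∈ Jgrp t (-(D : ℤ)) := by
  have ht : t ≠ 0 := hirr.ne_zero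
  obtain ⟨a, b, hb, rfl⟩ := IsFractionRing.div_surjective (A := R0) x
  have hb0 : b ≠ 0 := nonZeroDivisors.ne_zero hb
  obtain ⟨v, u, huv⟩ := IsDiscreteValuationRing.eq_unit_mul_pow_irreducible hb0 hirr
  refine ⟨v, a * ↑u⁻¹, ?_⟩
  rw [huv, div_eq_mul_inv, map_mul, map_pow, mul_inv, ← zpow_natCast (algebraMap R0 F0 t) v,
    ← zpow_neg, unit_inv_iota, map_mul]
  ring

end Jsec
section Util
variable {F : Type*} [Field F] {σ : Type*} (G : ℤ → AddSubgroup F)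
variable (hmul : ∀ {k l : ℤ} {x y : F}, x ∈ G k → y ∈ G l → x * y ∈ G (k + l))
variable (hmono : ∀ {k l : ℤ}, k ≤ l → ∀ {x : F}, x ∈ G l → x ∈ G k)

include hmul hmono in
lemma GmatApply {n : ℕ} (Tl : (Fin n → F) →ₗ[F] (Fin n → F)) {Dm k : ℤ}
    (hent : ∀ i j, Tl (Pi.single j 1) i ∈ G (-Dm)) {x : Fin n → F}
    (hx : ∀ j, x j ∈ G k) (i : Fin n) : Tl x i ∈ G (k - Dm) := by
  have h := congrFun (LinearMap.pi_apply_eq_sum_univ Tl x) i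
  rw [Finset.sum_apply] at h
  rw [h]
  refine AddSubgroup.sum_mem _ fun j _ => ?_
  have hs : (fun k => if j = k then (1:F) else 0) = Pi.single j 1 := by
    funext k; simp [Pi.single_apply, eq_comm]
  rw [Pi.smul_apply, smul_eq_mul, hs]
  exact hmono (le_of_eq (by ring)) (hmul (hx j) (hent i j))

lemma evalLinPart {F0 : Type*} [Field F0] {n : ℕ}
    (T1 T2 : (Fin n → F0) ≃ₗ[F0] (Fin n → F0)) (vv ww : Fin n → F0) (i : Fin n) :
    eval (Sum.elim vv ww) (linPart T1 T2 i) = T1 vv i + T2 ww i := by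
  have hs : ∀ j : Fin n, (fun k => if j = k then (1:F0) else 0) = Pi.single j 1 := by
    intro j; funext k; simp [Pi.single_apply, eq_comm]
  have h1 := congrFun (LinearMap.pi_apply_eq_sum_univ
    (T1 : (Fin n → F0) →ₗ[F0] (Fin n → F0)) vv) i
  have h2 := congrFun (LinearMap.pi_apply_eq_sum_univ
    (T2 : (Fin n → F0) →ₗ[F0] (Fin n → F0)) ww) i
  rw [Finset.sum_apply] at h1 h2
  simp only [hs, Pi.smul_apply, smul_eq_mul, LinearEquiv.coe_coe] at h1 h2
  simp only [linPart, map_add, map_sum, map_mul, eval_C, eval_X, Sum.elim_inl, Sum.elim_inr]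
  rw [h1, h2]
  congr 1 <;> exact Finset.sum_congr rfl fun j _ => mul_comm _ _

end Util

section JUtil
variable {R0 : Type*} [CommRing R0] [IsDomain R0] [IsDiscreteValuationRing R0] {σ : Type*}
local notation "F0" => FractionRing R0
variable {t : R0} (hirr : Irreducible t)

include hirr in
lemma JexFin {ι : Type*} [Fintype ι] (f : ι → F0) :
    ∃ D : ℕ, ∀ i, f i ∈ Jgrp t (-(D : ℤ)) := by
  classical
  choose Df hDf using fun i => Jex hirr (f i)
  refine ⟨Finset.univ.sup Df, fun i => ?_⟩
  exact Jmono hirr.ne_zero (by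
    have := Finset.le_sup (f := Df) (Finset.mem_univ i); omega) (hDf i)

include hirr in
lemma JexPoly (P : MvPolynomial σ F0) :
    ∃ D : ℕ, ∀ d, coeff d P ∈ Jgrp t (-(D : ℤ)) := by
  classical
  choose Df hDf using fun d => Jex hirr (coeff d P)
  refine ⟨P.support.sup Df, fun d => ?_⟩
  by_cases hd : d ∈ P.support
  · exact Jmono hirr.ne_zero (by
      have := Finset.le_sup (f := Df) hd; omega) (hDf d)
  · rw [MvPolynomial.notMem_support_iff.mp hd]
    exact (Jgrp t _).zero_mem

include hirr in
lemma JexPolyFam {ι : Type*} [Fintype ι] (P : ι → MvPolynomial σ F0) :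
    ∃ D : ℕ, ∀ i d, coeff d (P i) ∈ Jgrp t (-(D : ℤ)) := by
  classical
  choose Df hDf using fun i => JexPoly hirr (P i)
  refine ⟨Finset.univ.sup Df, fun i d => ?_⟩
  exact Jmono hirr.ne_zero (by
    have := Finset.le_sup (f := Df) (Finset.mem_univ i); omega) (hDf i d)

include hirr in
lemma JnotAllFam {ι : Type*} [Fintype ι] (f : ι → F0) (hf : ∀ i, f i ≠ 0) :
    ∃ c : ℕ, ∀ i, f i ∉ Jgrp t ((c : ℤ) + 1) := by
  classical
  choose cf hcf using fun i => JnotAll hirr (hf i)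
  refine ⟨Finset.univ.sup cf, fun i hmem => ?_⟩
  refine hcf i (Jmono hirr.ne_zero (by
    have := Finset.le_sup (f := cf) (Finset.mem_univ i); omega) hmem)

end JUtil

set_option maxHeartbeats 1000000 in
theorem stmt_1
    -- R̂₀ is a complete discrete valuation ring with uniformizer t,
    (R0 : Type*) [CommRing R0] [IsDomain R0] [IsDiscreteValuationRing R0]
    [IsAdicComplete (IsLocalRing.maximalIdeal R0) R0]
    (t : R0) (ht : Irreducible t)
    -- containing a subring T which is a complete discrete valuation ring
    -- with the same uniformizer t.
    (T : Subring R0) (htT : t ∈ T) [IsDiscreteValuationRing T]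
    [IsAdicComplete (IsLocalRing.maximalIdeal T) T]
    (htTirr : Irreducible (⟨t, htT⟩ : T))
    -- F₁, F₂ are subfields of the fraction field F₀ of R̂₀ containing T
    (F1 F2 : Subfield (FractionRing R0))
    (hTF1 : ∀ r : R0, r ∈ T → algebraMap R0 (FractionRing R0) r ∈ F1)
    (hTF2 : ∀ r : R0, r ∈ T → algebraMap R0 (FractionRing R0) r ∈ F2)
    -- V ⊆ F₁ ∩ R̂₀ and W ⊆ F₂ ∩ R̂₀ are t-adically complete T-submodules
    (V W : AddSubgroup R0)
    (hVT : ∀ c : R0, c ∈ T → ∀ x ∈ V, c * x ∈ V)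
    (hWT : ∀ c : R0, c ∈ T → ∀ x ∈ W, c * x ∈ W)
    (hVF1 : ∀ x ∈ V, algebraMap R0 (FractionRing R0) x ∈ F1)
    (hWF2 : ∀ x ∈ W, algebraMap R0 (FractionRing R0) x ∈ F2)
    (hVcompl : ∀ s : ℕ → R0, (∀ n, s n ∈ V) →
      (∀ n, ∃ r ∈ V, s (n + 1) - s n = t ^ n * r) →
      ∃ l ∈ V, ∀ n, ∃ r ∈ V, l - s n = t ^ n * r)
    (hWcompl : ∀ s : ℕ → R0, (∀ n, s n ∈ W) →
      (∀ n, ∃ r ∈ W, s (n + 1) - s n = t ^ n * r) →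
      ∃ l ∈ W, ∀ n, ∃ r ∈ W, l - s n = t ^ n * r)
    -- satisfying V + W = R̂₀,
    (hVW : ∀ a : R0, ∃ x ∈ V, ∃ z ∈ W, a = x + z)
    -- and F₁ is t-adically dense in F₀.
    (hdense : ∀ a : FractionRing R0, ∀ m : ℕ, ∃ b ∈ F1, ∃ r : R0,
      a - b = algebraMap R0 (FractionRing R0) (t ^ m * r))
    -- f = (f₁,…,fₙ) = (p₁/q₁,…,pₙ/qₙ) is a rational map 𝔸ⁿ × 𝔸ⁿ ⇢ 𝔸ⁿ over F₀,
    (n : ℕ) (p q : Fin n → MvPolynomial (Fin n ⊕ Fin n) (FractionRing R0))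
    -- defined at the origin,
    (hq0 : ∀ i, eval (fun _ => (0 : FractionRing R0)) (q i) ≠ 0)
    -- with expansion fᵢ = T_{1,i}(x) + T_{2,i}(y) + (terms of total degree ≥ 2)
    -- where T₁ and T₂ are automorphisms of the vector space F₀ⁿ:
    (T1 T2 : (Fin n → FractionRing R0) ≃ₗ[FractionRing R0] (Fin n → FractionRing R0))
    (hlin : ∀ i, ∀ d : (Fin n ⊕ Fin n) →₀ ℕ, (d.sum fun _ e => e) ≤ 1 →
      coeff d (p i - linPart T1 T2 i * q i) = 0) :
    -- Then for all a ∈ 𝔸ⁿ(F₀) of sufficiently small norm (i.e. a ∈ (tᵐ R̂₀)ⁿ for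
    -- suitable m), there are v ∈ F₁ⁿ and w ∈ F₂ⁿ with (v,w) in the domain of f
    -- and f(v,w) = a.
    ∃ m : ℕ, ∀ a : Fin n → FractionRing R0,
      (∀ i, ∃ r : R0, a i = algebraMap R0 (FractionRing R0) (t ^ m * r)) →
      ∃ vv ww : Fin n → FractionRing R0,
        (∀ j, vv j ∈ F1) ∧ (∀ j, ww j ∈ F2) ∧
        (∀ i, eval (Sum.elim vv ww) (q i) ≠ 0) ∧
        (∀ i, eval (Sum.elim vv ww) (p i) = a i * eval (Sum.elim vv ww) (q i)) := by
  classical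
  have ht0 : t ≠ 0 := ht.ne_zero
  set F := FractionRing R0 with hF
  let ι : R0 →+* F := (algebraMap R0 F : R0 →+* F)
  let J : ℤ → AddSubgroup F := Jgrp t
  have hJmul : ∀ {k l : ℤ} {x y : F}, x ∈ J k → y ∈ J l → x * y ∈ J (k + l) :=
    fun {k l x y} hx hy => Jmul ht0 hx hy
  have hJmono : ∀ {k l : ℤ}, k ≤ l → ∀ {x : F}, x ∈ J l → x ∈ J k :=
    fun {k l} h {x} hx => Jmono ht0 h hx
  have hJone : (1 : F) ∈ J 0 := Jone
  -- constants
  obtain ⟨Dp, hDp⟩ := JexPolyFam ht p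
  obtain ⟨Dq, hDq⟩ := JexPolyFam ht q
  set g : Fin n → MvPolynomial (Fin n ⊕ Fin n) F :=
    fun i => p i - linPart T1 T2 i * q i with hgdef
  obtain ⟨Dg, hDg⟩ := JexPolyFam ht g
  obtain ⟨Dm1, hDm1⟩ := JexFin ht
    (fun ij : Fin n × Fin n => (T1 : (Fin n → F) →ₗ[F] (Fin n → F)) (Pi.single ij.2 1) ij.1)
  obtain ⟨Dm2, hDm2⟩ := JexFin ht
    (fun ij : Fin n × Fin n =>
      ((T2.symm : (Fin n → F) ≃ₗ[F] (Fin n → F)) : (Fin n → F) →ₗ[F] (Fin n → F))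
        (Pi.single ij.2 1) ij.1)
  set Smap : (Fin n → F) ≃ₗ[F] (Fin n → F) := T2.trans T1.symm with hSmap
  set N : ℕ := Dm1 + Dm2 + 1 with hN
  choose Pm hPmF1 Pr hPr using
    fun ij : Fin n × Fin n => hdense (Smap (Pi.single ij.2 1) ij.1) N
  obtain ⟨Dpm, hDpm⟩ := JexFin ht Pm
  obtain ⟨c, hc⟩ := JnotAllFam ht (fun i => eval (fun _ => (0:F)) (q i)) hq0
  set Moff : ℕ := Dm2 + Dpm with hMoff
  set bb : ℕ := Moff + Dg + 4*Dq + 4*c + 4 with hbb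
  set m : ℕ := bb + Moff with hm
  refine ⟨m, fun a ha => ?_⟩
  have haJ : ∀ i, a i ∈ J (m : ℤ) := fun i => Jnat.mpr (ha i)
  -- the iteration machinery
  let pick : F → ℕ → R0 := fun x s => if h : ∃ r : R0, x = ι (t^s * r) then h.choose else 0
  have hpick : ∀ (x : F) (s : ℕ), x ∈ J (s : ℤ) → x = ι (t^s * pick x s) := by
    intro x s hx
    have h : ∃ r : R0, x = ι (t^s * r) := Jnat.mp hx
    simp only [pick, dif_pos h]
    exact h.choose_spec
  choose spV hspV spW hspW hspEq using hVW
  set sN : ℕ → ℕ := fun j => m + j - Dm2 with hsN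
  have hmDm2 : Dm2 ≤ m := by omega
  have hsNc : ∀ j, (sN j : ℤ) = (m : ℤ) + j - Dm2 := by intro j; simp only [sN]; omega
  let mkz : ((Fin n → R0) × (Fin n → R0)) → (Fin n ⊕ Fin n) → F :=
    fun s => Sum.elim (fun i => ∑ j' : Fin n, Pm (i, j') * ι (s.1 j')) (fun i => ι (s.2 i))
  let Z : ℕ → ((Fin n → R0) × (Fin n → R0)) := fun j =>
    Nat.rec (motive := fun _ => (Fin n → R0) × (Fin n → R0)) (0, 0)
      (fun j s =>
        (fun i => s.1 i + t ^ (sN j) *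
            spV (pick (T2.symm (fun i' => a i' -
              eval (mkz s) (p i') * (eval (mkz s) (q i'))⁻¹) i) (sN j)),
         fun i => s.2 i + t ^ (sN j) *
            spW (pick (T2.symm (fun i' => a i' -
              eval (mkz s) (p i') * (eval (mkz s) (q i'))⁻¹) i) (sN j)))) j
  let Er : ℕ → Fin n → F := fun j i => a i -
    eval (mkz (Z j)) (p i) * (eval (mkz (Z j)) (q i))⁻¹
  let rr : ℕ → Fin n → R0 := fun j i => pick (T2.symm (Er j) i) (sN j)
  have hZ0 : Z 0 = (0, 0) := rfl
  have hZS : ∀ j, Z (j+1) =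
      (fun i => (Z j).1 i + t ^ (sN j) * spV (rr j i),
       fun i => (Z j).2 i + t ^ (sN j) * spW (rr j i)) := fun j => rfl
  -- membership invariants
  have hZV : ∀ j i, (Z j).1 i ∈ V := by
    intro j
    induction j with
    | zero => intro i; exact V.zero_mem
    | succ j ih =>
      intro i
      rw [hZS j]
      exact V.add_mem (ih i) (hVT _ (pow_mem htT _) _ (hspV _))
  have hZW : ∀ j i, (Z j).2 i ∈ W := by
    intro j
    induction j with
    | zero => intro i; exact W.zero_mem
    | succ j ih =>
      intro i
      rw [hZS j]
      exact W.add_mem (ih i) (hWT _ (pow_mem htT _) _ (hspW _))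
  have hincrJ : ∀ (s : ℕ) (x : R0), ι (t ^ s * x) ∈ J (s : ℤ) := by
    intro s x; exact Jnat.mpr ⟨x, rfl⟩
  have hZJ1 : ∀ j i, ι ((Z j).1 i) ∈ J ((m : ℤ) - Dm2) := by
    intro j
    induction j with
    | zero => intro i; simpa [hZ0] using (J _).zero_mem
    | succ j ih =>
      intro i
      rw [hZS j]
      simp only [map_add]
      exact (J _).add_mem (ih i)
        (hJmono (by rw [hsNc j]; omega) (hincrJ (sN j) _))
  have hZJ2 : ∀ j i, ι ((Z j).2 i) ∈ J ((m : ℤ) - Dm2) := by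
    intro j
    induction j with
    | zero => intro i; simpa [hZ0] using (J _).zero_mem
    | succ j ih =>
      intro i
      rw [hZS j]
      simp only [map_add]
      exact (J _).add_mem (ih i)
        (hJmono (by rw [hsNc j]; omega) (hincrJ (sN j) _))
  have hmkzJ : ∀ (s : (Fin n → R0) × (Fin n → R0)),
      (∀ i, ι (s.1 i) ∈ J ((m:ℤ) - Dm2)) → (∀ i, ι (s.2 i) ∈ J ((m:ℤ) - Dm2)) →
      ∀ i, mkz s i ∈ J (bb : ℤ) := by
    rintro s hs1 hs2 (i | i)
    · refine AddSubgroup.sum_mem _ fun j' _ => ?_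
      refine hJmono ?_ (hJmul (hDpm (i, j')) (hs1 j'))
      simp only [hm, hMoff]; push_cast; omega
    · refine hJmono ?_ (hs2 i)
      simp only [hm, hMoff]; push_cast; omega
  have hzb : ∀ j i, mkz (Z j) i ∈ J (bb : ℤ) := fun j =>
    hmkzJ (Z j) (hZJ1 j) (hZJ2 j)
  -- facts about q-evaluations on the ball
  have hQ : ∀ (zz : (Fin n ⊕ Fin n) → F), (∀ i, zz i ∈ J (bb : ℤ)) →
      ∀ i, eval zz (q i) ≠ 0 ∧ (eval zz (q i))⁻¹ ∈ J (-((c:ℤ) + Dq)) ∧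
        eval zz (q i) ∈ J (-(Dq:ℤ)) := by
    intro zz hzz i
    have hz0 : ∀ i', zz i' ∈ J (0:ℤ) := fun i' =>
      hJmono (by exact_mod_cast Int.ofNat_nonneg bb) (hzz i')
    have hQmem : eval zz (q i) ∈ J (-(Dq:ℤ)) := by
      have := GevalMem J hJmul hJmono hJone (le_refl (0:ℤ)) 0 (q i) zz (hDq i) hz0
        (fun d hd => absurd hd (by omega))
      simpa using this
    have hQdiff : eval zz (q i) - eval (fun _ => (0:F)) (q i) ∈ J ((bb:ℤ) - Dq) := by
      have := GevalDiff J hJmul hJmono hJone (le_refl (0:ℤ)) 0 (q i)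
        (fun _ => (0:F)) zz (hDq i) (fun i' => (J _).zero_mem) hz0
        (fun i' => by simpa using hzz i') (fun d hd => absurd hd (by omega))
      simpa using this
    have hQnot : eval zz (q i) ∉ J ((c:ℤ)+1) := by
      intro hmem
      refine hc i ?_
      have hrw : eval (fun _ => (0:F)) (q i)
          = eval zz (q i) - (eval zz (q i) - eval (fun _ => (0:F)) (q i)) := by ring
      rw [hrw]
      exact (J _).sub_mem hmem (hJmono (by simp only [hbb]; push_cast; omega) hQdiff)
    obtain ⟨h1, h2⟩ := Jinv ht hQmem hQnot
    exact ⟨h1, h2, hQmem⟩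
  -- degree-2 vanishing for g
  have hg2 : ∀ i (d : (Fin n ⊕ Fin n) →₀ ℕ), (d.sum fun _ e => e) < 2 → coeff d (g i) = 0 :=
    fun i d hd => hlin i d (by omega)
  -- polynomial identity p = L*q + g
  have hpLq : ∀ i, p i = linPart T1 T2 i * q i + g i := by
    intro i; simp only [hgdef]; ring
  -- error invariant
  have hdecomp : ∀ (zz : (Fin n ⊕ Fin n) → F), (∀ s, zz s ∈ J (bb:ℤ)) → ∀ i,
      a i - eval zz (p i) * (eval zz (q i))⁻¹
      = a i - eval zz (linPart T1 T2 i) - eval zz (g i) * (eval zz (q i))⁻¹ := by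
    intro zz hzz i
    have hq1 := (hQ zz hzz i).1
    rw [hpLq i, map_add, map_mul]
    field_simp
    ring
  have hErrJ : ∀ (j : ℕ) (i : Fin n), Er j i ∈ J ((m : ℤ) + j) := by
    intro j
    induction j with
    | zero =>
      intro i
      have hz00 : mkz (Z 0) = fun _ => (0:F) := by
        funext s
        rcases s with i' | i' <;> simp [mkz, hZ0]
      have hL0 : constantCoeff (linPart T1 T2 i) = 0 := by
        simp [linPart, map_sum, constantCoeff_X]
      have hp0 : eval (mkz (Z 0)) (p i) = 0 := by
        rw [hz00, eval_zero', hpLq i, map_add, map_mul, hL0, zero_mul, zero_add]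
        exact hg2 i 0 (by simp)
      show a i - eval (mkz (Z 0)) (p i) * (eval (mkz (Z 0)) (q i))⁻¹ ∈ J ((m:ℤ) + 0)
      rw [hp0, zero_mul, sub_zero]
      exact hJmono (by omega) (haJ i)
    | succ j ih =>
      -- names for the two z's and coordinate functions
      have hu : ∀ i, T2.symm (Er j) i ∈ J ((sN j : ℤ)) := by
        intro i
        have := GmatApply J hJmul hJmono
          ((T2.symm : (Fin n → F) ≃ₗ[F] (Fin n → F)) : (Fin n → F) →ₗ[F] (Fin n → F))
          (fun i1 j1 => hDm2 (i1, j1)) ih i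
        simp only [LinearEquiv.coe_coe] at this
        exact hJmono (le_of_eq (by rw [hsNc j])) this
      have hrr : ∀ i, T2.symm (Er j) i = ι (t ^ (sN j) * rr j i) :=
        fun i => hpick _ _ (hu i)
      set ξ : Fin n → F := fun i => ι (t ^ (sN j) * spV (rr j i)) with hξ
      set ζ : Fin n → F := fun i => ι (t ^ (sN j) * spW (rr j i)) with hζ
      set δv : Fin n → F := fun i => ∑ j' : Fin n, Pm (i, j') * ξ j' with hδv
      have hξζ : (fun i => ξ i + ζ i) = T2.symm (Er j) := by
        funext i
        rw [hrr i, hξ, hζ]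
        simp only []
        rw [← map_add, ← mul_add, ← hspEq (rr j i)]
      have hξJ : ∀ i, ξ i ∈ J ((sN j : ℤ)) := fun i => hincrJ _ _
      have hζJ : ∀ i, ζ i ∈ J ((sN j : ℤ)) := fun i => hincrJ _ _
      have hδvJ : ∀ i, δv i ∈ J ((m:ℤ) + j - Moff) := by
        intro i
        refine AddSubgroup.sum_mem _ fun j' _ => ?_
        refine hJmono ?_ (hJmul (hDpm (i, j')) (hξJ j'))
        rw [hsNc j]; simp only [hMoff]; push_cast; omega
      have hζJ' : ∀ i, ζ i ∈ J ((m:ℤ) + j - Moff) := fun i =>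
        hJmono (by rw [hsNc j]; simp only [hMoff]; push_cast; omega) (hζJ i)
      -- coordinates of z and z'
      have hz'v : ∀ i, mkz (Z (j+1)) (Sum.inl i) = mkz (Z j) (Sum.inl i) + δv i := by
        intro i
        show (∑ j' : Fin n, Pm (i, j') * ι ((Z (j+1)).1 j')) = _
        rw [hZS j]
        simp only [map_add, mul_add, Finset.sum_add_distrib]
        rfl
      have hz'w : ∀ i, mkz (Z (j+1)) (Sum.inr i) = mkz (Z j) (Sum.inr i) + ζ i := by
        intro i
        show ι ((Z (j+1)).2 i) = _
        rw [hZS j]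
        simp only [map_add]
        rfl
      have hδJ : ∀ s, mkz (Z (j+1)) s - mkz (Z j) s ∈ J ((m:ℤ) + j - Moff) := by
        rintro (i | i)
        · rw [hz'v i, add_sub_cancel_left]; exact hδvJ i
        · rw [hz'w i, add_sub_cancel_left]; exact hζJ' i
      -- the linear step
      have hlinstep : ∀ i, Er j i - (T1 δv i + T2 ζ i) ∈ J ((m:ℤ) + j + 1) := by
        intro i
        have hErT2 : Er j i = T2 (fun i' => ξ i' + ζ i') i := by
          rw [hξζ]; simp
        have hSξ : T1 (Smap ξ) i = T2 ξ i := by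
          simp only [hSmap, LinearEquiv.trans_apply]
          rw [T1.apply_symm_apply]
        have key : Er j i - (T1 δv i + T2 ζ i) = T1 (fun i' => Smap ξ i' - δv i') i := by
          have h1 : (fun i' => Smap ξ i' - δv i') = Smap ξ - δv := rfl
          have h2 : (fun i' => ξ i' + ζ i') = ξ + ζ := rfl
          rw [h1, map_sub, hErT2, h2, map_add]
          simp only [Pi.sub_apply, Pi.add_apply]
          rw [hSξ]
          ring
        rw [key]
        have hcoord : ∀ i', Smap ξ i' - δv i' ∈ J ((N:ℤ) + sN j) := by
          intro i'
          have hs : ∀ j' : Fin n, (fun k => if j' = k then (1:F) else 0) = Pi.single j' 1 := by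
            intro j'; funext k; simp [Pi.single_apply, eq_comm]
          have hSx := congrFun (LinearMap.pi_apply_eq_sum_univ
            ((Smap : (Fin n → F) ≃ₗ[F] (Fin n → F)) : (Fin n → F) →ₗ[F] (Fin n → F)) ξ) i'
          rw [Finset.sum_apply] at hSx
          simp only [hs, Pi.smul_apply, smul_eq_mul, LinearEquiv.coe_coe] at hSx
          rw [hSx, hδv]
          simp only []
          rw [← Finset.sum_sub_distrib]
          refine AddSubgroup.sum_mem _ fun j' _ => ?_
          have hfact : ξ j' * Smap (Pi.single j' 1) i' - Pm (i', j') * ξ j'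
              = (Smap (Pi.single j' 1) i' - Pm (i', j')) * ξ j' := by ring
          rw [hfact]
          have hd : Smap (Pi.single j' 1) i' - Pm (i', j') ∈ J ((N:ℤ)) :=
            Jnat.mpr ⟨Pr (i', j'), hPr (i', j')⟩
          exact hJmono (le_of_eq (by ring)) (hJmul hd (hξJ j'))
        have := GmatApply J hJmul hJmono
          ((T1 : (Fin n → F) ≃ₗ[F] (Fin n → F)) : (Fin n → F) →ₗ[F] (Fin n → F))
          (fun i1 j1 => hDm1 (i1, j1)) hcoord i
        simp only [LinearEquiv.coe_coe] at this
        refine hJmono ?_ this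
        rw [hsNc j]; simp only [hN]; push_cast; omega
      -- the nonlinear (quadratic) step
      have hNdiff : ∀ i, eval (mkz (Z (j+1))) (g i) * (eval (mkz (Z (j+1))) (q i))⁻¹
          - eval (mkz (Z j)) (g i) * (eval (mkz (Z j)) (q i))⁻¹ ∈ J ((m:ℤ) + j + 1) := by
        intro i
        obtain ⟨hq1, hq1i, hq1m⟩ := hQ _ (hzb j) i
        obtain ⟨hq2, hq2i, hq2m⟩ := hQ _ (hzb (j+1)) i
        have hbb0 : (0:ℤ) ≤ (bb:ℤ) := by positivity
        have hgz : eval (mkz (Z j)) (g i) ∈ J (2*(bb:ℤ) - Dg) := by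
          have := GevalMem J hJmul hJmono hJone hbb0 2 (g i) (mkz (Z j)) (hDg i)
            (hzb j) (hg2 i)
          exact hJmono (le_of_eq (by push_cast; ring)) this
        have hgdiff : eval (mkz (Z (j+1))) (g i) - eval (mkz (Z j)) (g i)
            ∈ J (((m:ℤ) + j - Moff) + bb - Dg) := by
          have := GevalDiff J hJmul hJmono hJone hbb0 2 (g i)
            (mkz (Z j)) (mkz (Z (j+1))) (hDg i) (hzb j) (hzb (j+1)) hδJ (hg2 i)
          exact hJmono (le_of_eq (by push_cast; ring)) this
        have hz0 : ∀ s, mkz (Z j) s ∈ J (0:ℤ) := fun s => hJmono hbb0 (hzb j s)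
        have hz0' : ∀ s, mkz (Z (j+1)) s ∈ J (0:ℤ) := fun s => hJmono hbb0 (hzb (j+1) s)
        have hqdiff : eval (mkz (Z (j+1))) (q i) - eval (mkz (Z j)) (q i)
            ∈ J (((m:ℤ) + j - Moff) - Dq) := by
          have := GevalDiff J hJmul hJmono hJone (le_refl (0:ℤ)) 0 (q i)
            (mkz (Z j)) (mkz (Z (j+1))) (hDq i) hz0 hz0' hδJ
            (fun d hd => absurd hd (by omega))
          exact hJmono (le_of_eq (by push_cast; ring)) this
        have key : eval (mkz (Z (j+1))) (g i) * (eval (mkz (Z (j+1))) (q i))⁻¹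
            - eval (mkz (Z j)) (g i) * (eval (mkz (Z j)) (q i))⁻¹
            = ((eval (mkz (Z (j+1))) (g i) - eval (mkz (Z j)) (g i)) * eval (mkz (Z j)) (q i)
               - eval (mkz (Z j)) (g i) * (eval (mkz (Z (j+1))) (q i) - eval (mkz (Z j)) (q i)))
              * ((eval (mkz (Z (j+1))) (q i))⁻¹ * (eval (mkz (Z j)) (q i))⁻¹) := by
          have e1 := mul_inv_cancel₀ hq1
          have e2 := mul_inv_cancel₀ hq2
          linear_combination (-(eval (mkz (Z (j+1))) (g i) * (eval (mkz (Z (j+1))) (q i))⁻¹)) * e1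
            + (eval (mkz (Z j)) (g i) * (eval (mkz (Z j)) (q i))⁻¹) * e2
        rw [key]
        have t1 : (eval (mkz (Z (j+1))) (g i) - eval (mkz (Z j)) (g i)) * eval (mkz (Z j)) (q i)
            ∈ J ((((m:ℤ) + j - Moff) + bb - Dg) + -(Dq:ℤ)) := hJmul hgdiff hq1m
        have t2 : eval (mkz (Z j)) (g i) * (eval (mkz (Z (j+1))) (q i) - eval (mkz (Z j)) (q i))
            ∈ J ((2*(bb:ℤ) - Dg) + (((m:ℤ) + j - Moff) - Dq)) := hJmul hgz hqdiff
        have t2' := hJmono (show ((((m:ℤ) + j - Moff) + bb - Dg) + -(Dq:ℤ))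
            ≤ ((2*(bb:ℤ) - Dg) + (((m:ℤ) + j - Moff) - Dq)) by
          simp only [hm]; push_cast; omega) t2
        have hsub := (J ((((m:ℤ) + j - Moff) + bb - Dg) + -(Dq:ℤ))).sub_mem t1 t2'
        refine hJmono ?_ (hJmul hsub (hJmul hq2i hq1i))
        simp only [hbb, hMoff]
        push_cast
        omega
      -- assemble
      intro i
      have eδ1 : eval (mkz (Z (j+1))) (linPart T1 T2 i)
          = eval (mkz (Z j)) (linPart T1 T2 i) + (T1 δv i + T2 ζ i) := by
        have e1 : eval (mkz (Z j)) (linPart T1 T2 i)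
            = T1 (fun i' => mkz (Z j) (Sum.inl i')) i + T2 (fun i' => mkz (Z j) (Sum.inr i')) i :=
          evalLinPart T1 T2 _ _ i
        have e2 : eval (mkz (Z (j+1))) (linPart T1 T2 i)
            = T1 (fun i' => mkz (Z (j+1)) (Sum.inl i')) i
              + T2 (fun i' => mkz (Z (j+1)) (Sum.inr i')) i :=
          evalLinPart T1 T2 _ _ i
        have e3 : (fun i' => mkz (Z (j+1)) (Sum.inl i'))
            = (fun i' => mkz (Z j) (Sum.inl i')) + δv := by
          funext i'; rw [hz'v i']; rfl
        have e4 : (fun i' => mkz (Z (j+1)) (Sum.inr i'))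
            = (fun i' => mkz (Z j) (Sum.inr i')) + ζ := by
          funext i'; rw [hz'w i']; rfl
        rw [e2, e3, e4, map_add, map_add, e1]
        simp only [Pi.add_apply]
        ring
      have efin : Er (j+1) i = (Er j i - (T1 δv i + T2 ζ i))
          - (eval (mkz (Z (j+1))) (g i) * (eval (mkz (Z (j+1))) (q i))⁻¹
             - eval (mkz (Z j)) (g i) * (eval (mkz (Z j)) (q i))⁻¹) := by
        show a i - eval (mkz (Z (j+1))) (p i) * (eval (mkz (Z (j+1))) (q i))⁻¹ = _
        rw [hdecomp _ (hzb (j+1)) i]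
        have erj : Er j i = a i - eval (mkz (Z j)) (linPart T1 T2 i)
            - eval (mkz (Z j)) (g i) * (eval (mkz (Z j)) (q i))⁻¹ :=
          hdecomp _ (hzb j) i
        rw [erj, eδ1]
        ring
      rw [efin]
      refine hJmono (le_of_eq (by push_cast; ring)) ((J ((m:ℤ) + j + 1)).sub_mem (hlinstep i) (hNdiff i))
  -- increments are of the required shape for completeness of V and W
  have hVincr : ∀ i (j : ℕ), ∃ r ∈ V, (Z (j+1)).1 i - (Z j).1 i = t ^ j * r := by
    intro i j
    refine ⟨t ^ (m - Dm2) * spV (rr j i), hVT _ (pow_mem htT _) _ (hspV _), ?_⟩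
    rw [hZS j]
    show (Z j).1 i + t ^ (sN j) * spV (rr j i) - (Z j).1 i = _
    rw [add_sub_cancel_left, ← mul_assoc, ← pow_add]
    congr 2
    simp only [sN]; omega
  have hWincr : ∀ i (j : ℕ), ∃ r ∈ W, (Z (j+1)).2 i - (Z j).2 i = t ^ j * r := by
    intro i j
    refine ⟨t ^ (m - Dm2) * spW (rr j i), hWT _ (pow_mem htT _) _ (hspW _), ?_⟩
    rw [hZS j]
    show (Z j).2 i + t ^ (sN j) * spW (rr j i) - (Z j).2 i = _
    rw [add_sub_cancel_left, ← mul_assoc, ← pow_add]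
    congr 2
    simp only [sN]; omega
  choose lV hlV hlVtail using fun i => hVcompl (fun j => (Z j).1 i)
    (fun j => hZV j i) (fun j => hVincr i j)
  choose lW hlW hlWtail using fun i => hWcompl (fun j => (Z j).2 i)
    (fun j => hZW j i) (fun j => hWincr i j)
  set vv : Fin n → F := fun i => ∑ j' : Fin n, Pm (i, j') * ι (lV j') with hvv
  set ww : Fin n → F := fun i => ι (lW i) with hww
  have hmkzlw : mkz (lV, lW) = Sum.elim vv ww := rfl
  have hvvF1 : ∀ i, vv i ∈ F1 := by
    intro i
    refine Subfield.sum_mem _ fun j' _ => F1.mul_mem (hPmF1 (i, j')) (hVF1 _ (hlV j'))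
  have hwwF2 : ∀ i, ww i ∈ F2 := fun i => hWF2 _ (hlW i)
  -- tail estimates
  have hlVJ : ∀ i (k : ℕ), ι (lV i) - ι ((Z k).1 i) ∈ J (k : ℤ) := by
    intro i k
    obtain ⟨r, hr, hre⟩ := hlVtail i k
    rw [← map_sub, hre]
    exact hincrJ k r
  have hlWJ : ∀ i (k : ℕ), ι (lW i) - ι ((Z k).2 i) ∈ J (k : ℤ) := by
    intro i k
    obtain ⟨r, hr, hre⟩ := hlWtail i k
    rw [← map_sub, hre]
    exact hincrJ k r
  have hZdiffJ1 : ∀ i (j k : ℕ), j ≤ k → ι ((Z k).1 i) - ι ((Z j).1 i) ∈ J ((sN j : ℤ)) := by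
    intro i j k hjk
    induction k, hjk using Nat.le_induction with
    | base => simpa using (J _).zero_mem
    | succ k hk ihk =>
      have hstep : ι ((Z (k+1)).1 i) - ι ((Z j).1 i)
          = (ι ((Z k).1 i) - ι ((Z j).1 i)) + ι (t ^ (sN k) * spV (rr k i)) := by
        rw [hZS k]
        show ι ((Z k).1 i + t ^ (sN k) * spV (rr k i)) - ι ((Z j).1 i) = _
        rw [map_add]; ring
      rw [hstep]
      refine (J _).add_mem ihk (hJmono ?_ (hincrJ (sN k) _))
      rw [hsNc j, hsNc k]; omega
  have hZdiffJ2 : ∀ i (j k : ℕ), j ≤ k → ι ((Z k).2 i) - ι ((Z j).2 i) ∈ J ((sN j : ℤ)) := by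
    intro i j k hjk
    induction k, hjk using Nat.le_induction with
    | base => simpa using (J _).zero_mem
    | succ k hk ihk =>
      have hstep : ι ((Z (k+1)).2 i) - ι ((Z j).2 i)
          = (ι ((Z k).2 i) - ι ((Z j).2 i)) + ι (t ^ (sN k) * spW (rr k i)) := by
        rw [hZS k]
        show ι ((Z k).2 i + t ^ (sN k) * spW (rr k i)) - ι ((Z j).2 i) = _
        rw [map_add]; ring
      rw [hstep]
      refine (J _).add_mem ihk (hJmono ?_ (hincrJ (sN k) _))
      rw [hsNc j, hsNc k]; omega
  have htailV : ∀ i (j : ℕ), ι (lV i) - ι ((Z j).1 i) ∈ J ((sN j : ℤ)) := by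
    intro i j
    have h1 : ι (lV i) - ι ((Z j).1 i)
        = (ι (lV i) - ι ((Z (m + j)).1 i)) + (ι ((Z (m + j)).1 i) - ι ((Z j).1 i)) := by ring
    rw [h1]
    refine (J _).add_mem (hJmono ?_ (hlVJ i (m + j))) (hZdiffJ1 i j (m + j) (by omega))
    rw [hsNc j]; push_cast; omega
  have htailW : ∀ i (j : ℕ), ι (lW i) - ι ((Z j).2 i) ∈ J ((sN j : ℤ)) := by
    intro i j
    have h1 : ι (lW i) - ι ((Z j).2 i)
        = (ι (lW i) - ι ((Z (m + j)).2 i)) + (ι ((Z (m + j)).2 i) - ι ((Z j).2 i)) := by ring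
    rw [h1]
    refine (J _).add_mem (hJmono ?_ (hlWJ i (m + j))) (hZdiffJ2 i j (m + j) (by omega))
    rw [hsNc j]; push_cast; omega
  have hlVJ0 : ∀ i, ι (lV i) ∈ J ((m : ℤ) - Dm2) := by
    intro i
    have := htailV i 0
    rw [hZ0] at this
    simp only [Pi.zero_apply, map_zero, sub_zero] at this
    exact hJmono (le_of_eq (by rw [hsNc 0]; push_cast; ring)) this
  have hlWJ0 : ∀ i, ι (lW i) ∈ J ((m : ℤ) - Dm2) := by
    intro i
    have := htailW i 0
    rw [hZ0] at this
    simp only [Pi.zero_apply, map_zero, sub_zero] at this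
    exact hJmono (le_of_eq (by rw [hsNc 0]; push_cast; ring)) this
  have hzsJ : ∀ s, mkz (lV, lW) s ∈ J (bb : ℤ) := hmkzJ (lV, lW) hlVJ0 hlWJ0
  have hzdiff : ∀ (j : ℕ) s, mkz (lV, lW) s - mkz (Z j) s ∈ J ((m:ℤ) + j - Moff) := by
    rintro j (i | i)
    · show (∑ j' : Fin n, Pm (i, j') * ι (lV j'))
          - (∑ j' : Fin n, Pm (i, j') * ι ((Z j).1 j')) ∈ _
      rw [← Finset.sum_sub_distrib]
      refine AddSubgroup.sum_mem _ fun j' _ => ?_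
      rw [← mul_sub]
      refine hJmono ?_ (hJmul (hDpm (i, j')) (htailV j' j))
      rw [hsNc j]; simp only [hMoff]; push_cast; omega
    · show ι (lW i) - ι ((Z j).2 i) ∈ _
      refine hJmono ?_ (htailW i j)
      rw [hsNc j]; simp only [hMoff]; push_cast; omega
  -- the limit satisfies the equation
  have hqne : ∀ i, eval (mkz (lV, lW)) (q i) ≠ 0 := fun i => (hQ _ hzsJ i).1
  have hfin : ∀ i, eval (mkz (lV, lW)) (p i) = a i * eval (mkz (lV, lW)) (q i) := by
    intro i
    rw [← sub_eq_zero]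
    refine Jhaus ht fun K => ?_
    set C0 : ℕ := Moff + Dp + Dq with hC0
    set j : ℕ := (K - m + C0).toNat with hj
    have hjK : K ≤ (m:ℤ) + j - C0 := by simp only [hj]; omega
    have hz0 : ∀ s, mkz (Z j) s ∈ J (0:ℤ) := fun s =>
      hJmono (by positivity) (hzb j s)
    have hz0' : ∀ s, mkz (lV, lW) s ∈ J (0:ℤ) := fun s =>
      hJmono (by positivity) (hzsJ s)
    have hA : eval (mkz (lV, lW)) (p i) - eval (mkz (Z j)) (p i)
        ∈ J (((m:ℤ) + j - Moff) - Dp) := by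
      have := GevalDiff J hJmul hJmono hJone (le_refl (0:ℤ)) 0 (p i)
        (mkz (Z j)) (mkz (lV, lW)) (hDp i) hz0 hz0' (hzdiff j)
        (fun d hd => absurd hd (by omega))
      exact hJmono (le_of_eq (by push_cast; ring)) this
    have hB : eval (mkz (lV, lW)) (q i) - eval (mkz (Z j)) (q i)
        ∈ J (((m:ℤ) + j - Moff) - Dq) := by
      have := GevalDiff J hJmul hJmono hJone (le_refl (0:ℤ)) 0 (q i)
        (mkz (Z j)) (mkz (lV, lW)) (hDq i) hz0 hz0' (hzdiff j)
        (fun d hd => absurd hd (by omega))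
      exact hJmono (le_of_eq (by push_cast; ring)) this
    have hEr : Er j i = a i - eval (mkz (Z j)) (p i) * (eval (mkz (Z j)) (q i))⁻¹ := rfl
    have hq1 := (hQ _ (hzb j) i).1
    have hC : eval (mkz (Z j)) (p i) - a i * eval (mkz (Z j)) (q i)
        = -(Er j i * eval (mkz (Z j)) (q i)) := by
      rw [hEr]
      field_simp
      rw [div_mul_cancel₀ _ hq1]; ring
    have hCJ : eval (mkz (Z j)) (p i) - a i * eval (mkz (Z j)) (q i)
        ∈ J (((m:ℤ) + j) + -(Dq:ℤ)) := by
      rw [hC]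
      exact (J _).neg_mem (hJmul (hErrJ j i) (hQ _ (hzb j) i).2.2)
    have ha0 : a i ∈ J (0:ℤ) := hJmono (by positivity) (haJ i)
    have hkey : eval (mkz (lV, lW)) (p i) - a i * eval (mkz (lV, lW)) (q i)
        = (eval (mkz (lV, lW)) (p i) - eval (mkz (Z j)) (p i))
          - a i * (eval (mkz (lV, lW)) (q i) - eval (mkz (Z j)) (q i))
          + (eval (mkz (Z j)) (p i) - a i * eval (mkz (Z j)) (q i)) := by ring
    rw [hkey]
    refine hJmono hjK ?_
    refine (J _).add_mem ((J _).sub_mem (hJmono ?_ hA) (hJmono ?_ (hJmul ha0 hB))) ?_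
    · simp only [hC0]; push_cast; omega
    · simp only [hC0]; push_cast; omega
    · refine hJmono ?_ hCJ
      simp only [hC0]; push_cast; omega
  refine ⟨vv, ww, hvvF1, hwwF2, fun i => ?_, fun i => ?_⟩
  · rw [← hmkzlw]; exact hqne i
  · rw [← hmkzlw]; exact hfin i
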